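/- Let f : Fin a → Fin m and g : Fin k → Fin m be chosen independently and uniformly at random. Then the probability that the range of g is contained in the range of f equals ∑_{i=1}^{min(a,m)} (i/m)^k · C(m,i) · surj(a,i) / m^a, where surj(a,i) = ∑_{j=0}^{i}(-1)^j C(i,j)(i-j)^a is the number of surjections from an a-set onto an i-set. -/

import Mathlib

open Finset

lemma aux_mem_inf {ι α : Type*} [DecidableEq α] [Fintype α] {s : Finset ι}
    {f : ι → Finset α} {a : α} : a ∈ s.inf f ↔ ∀ i ∈ s, a ∈ f i := by
  induction s using Finset.cons_induction with
  | empty => simp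
  | cons i s hi ih => simp [ih]

lemma aux_card_into {n m : ℕ} (s : Finset (Fin m)) :
    (Finset.univ.filter (fun g : Fin n → Fin m => ∀ x, g x ∈ s)).card = s.card ^ n := by
  have h : Finset.univ.filter (fun g : Fin n → Fin m => ∀ x, g x ∈ s)
      = Fintype.piFinset (fun _ : Fin n => s) := by
    ext g; simp [Fintype.mem_piFinset]
  rw [h, Fintype.card_piFinset]
  simp

lemma aux_surj_count (a m : ℕ) (s : Finset (Fin m)) :
    ((Finset.univ.filter
        (fun f : Fin a → Fin m => Finset.image f Finset.univ = s)).card : ℝ) =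
    ∑ j ∈ Finset.range (s.card + 1),
      (-1 : ℝ) ^ j * (s.card.choose j : ℝ) * ((s.card - j : ℕ) : ℝ) ^ a := by
  classical
  have key := Finset.inclusion_exclusion_sum_inf_compl (G := ℝ) s
    (fun y => Finset.univ.filter (fun g : Fin a → Fin m => y ∉ Finset.image g Finset.univ))
    (fun g => if Finset.image g Finset.univ ⊆ s then (1 : ℝ) else 0)
  have hL : (s.inf fun y =>
        (Finset.univ.filter (fun g : Fin a → Fin m => y ∉ Finset.image g Finset.univ))ᶜ)
      = Finset.univ.filter (fun g : Fin a → Fin m => s ⊆ Finset.image g Finset.univ) := by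
    ext g
    simp [aux_mem_inf, Finset.subset_iff]
  rw [hL] at key
  have hL2 : ∑ g ∈ Finset.univ.filter
        (fun g : Fin a → Fin m => s ⊆ Finset.image g Finset.univ),
      (if Finset.image g Finset.univ ⊆ s then (1 : ℝ) else 0)
      = ((Finset.univ.filter
          (fun f : Fin a → Fin m => Finset.image f Finset.univ = s)).card : ℝ) := by
    rw [Finset.sum_boole, Finset.filter_filter]
    have hset : Finset.univ.filter
        (fun g : Fin a → Fin m => s ⊆ Finset.image g Finset.univ ∧ Finset.image g Finset.univ ⊆ s)
        = Finset.univ.filter (fun f : Fin a → Fin m => Finset.image f Finset.univ = s) := by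
      apply Finset.filter_congr
      intro g _
      constructor
      · rintro ⟨h1, h2⟩; exact le_antisymm h2 h1
      · rintro rfl; exact ⟨le_rfl, le_rfl⟩
    rw [hset]
  rw [hL2] at key
  rw [key]
  -- now evaluate RHS: group powerset by card
  have hinner : ∀ t ∈ s.powerset,
      (∑ g ∈ t.inf (fun y => Finset.univ.filter
          (fun g : Fin a → Fin m => y ∉ Finset.image g Finset.univ)),
        (if Finset.image g Finset.univ ⊆ s then (1 : ℝ) else 0))
      = (((s.card - t.card : ℕ)) : ℝ) ^ a := by
    intro t ht
    rw [Finset.mem_powerset] at ht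
    have h1 : (t.inf (fun y => Finset.univ.filter
          (fun g : Fin a → Fin m => y ∉ Finset.image g Finset.univ)))
        = Finset.univ.filter (fun g : Fin a → Fin m => ∀ y ∈ t, y ∉ Finset.image g Finset.univ) := by
      ext g; simp [aux_mem_inf]
    rw [h1, Finset.sum_boole, Finset.filter_filter]
    have h2 : (Finset.univ.filter (fun g : Fin a → Fin m =>
          (∀ y ∈ t, y ∉ Finset.image g Finset.univ) ∧ Finset.image g Finset.univ ⊆ s))
        = Finset.univ.filter (fun g : Fin a → Fin m => ∀ x, g x ∈ s \ t) := by
      apply Finset.filter_congr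
      intro g _
      constructor
      · rintro ⟨h1', h2'⟩ x
        rw [Finset.mem_sdiff]
        refine ⟨h2' (Finset.mem_image_of_mem g (Finset.mem_univ x)), fun hx => ?_⟩
        exact h1' _ hx (Finset.mem_image_of_mem g (Finset.mem_univ x))
      · intro h
        constructor
        · intro y hy hyim
          rcases Finset.mem_image.mp hyim with ⟨x, -, rfl⟩
          exact (Finset.mem_sdiff.mp (h x)).2 hy
        · intro y hy
          rcases Finset.mem_image.mp hy with ⟨x, -, rfl⟩
          exact (Finset.mem_sdiff.mp (h x)).1
    rw [h2, aux_card_into, Finset.card_sdiff_of_subset ht]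
    norm_cast
  rw [Finset.sum_congr rfl (fun t ht => by rw [hinner t ht])]
  rw [Finset.powerset_card_biUnion, Finset.sum_biUnion (fun i _ j _ hij => Finset.pairwise_disjoint_powersetCard _ hij)]
  apply Finset.sum_congr rfl
  intro j hj
  have hcard : ∀ t ∈ Finset.powersetCard j s, t.card = j :=
    fun t ht => (Finset.mem_powersetCard.mp ht).2
  calc ∑ t ∈ Finset.powersetCard j s, (-1 : ℤ) ^ t.card • (((s.card - t.card : ℕ)) : ℝ) ^ a
      = ∑ t ∈ Finset.powersetCard j s, (-1 : ℝ) ^ j * (((s.card - j : ℕ)) : ℝ) ^ a := by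
        apply Finset.sum_congr rfl
        intro t ht
        rw [hcard t ht, zsmul_eq_mul]
        push_cast
        ring
    _ = (-1 : ℝ) ^ j * (s.card.choose j : ℝ) * ((s.card - j : ℕ) : ℝ) ^ a := by
        rw [Finset.sum_const, Finset.card_powersetCard, nsmul_eq_mul]
        ring

theorem range_subset_range_prob (a k m : ℕ) (ha : 1 ≤ a) (hm : 1 ≤ m) :
    ((Finset.univ.filter
        (fun p : (Fin a → Fin m) × (Fin k → Fin m) =>
          ∀ x, p.2 x ∈ Finset.image p.1 Finset.univ)).card : ℝ) / (m : ℝ) ^ (a + k) =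
      ∑ i ∈ Finset.Icc 1 (min a m),
        ((i : ℝ) / (m : ℝ)) ^ k * (m.choose i : ℝ) *
          (∑ j ∈ Finset.range (i + 1),
            (-1 : ℝ) ^ j * (i.choose j : ℝ) * ((i - j : ℕ) : ℝ) ^ a) / (m : ℝ) ^ a := by
  classical
  set F : ℕ → ℝ := fun i => ∑ j ∈ Finset.range (i + 1),
      (-1 : ℝ) ^ j * (i.choose j : ℝ) * ((i - j : ℕ) : ℝ) ^ a with hF
  -- Step 1: cardinality as sum over f
  have h1 : (Finset.univ.filter
        (fun p : (Fin a → Fin m) × (Fin k → Fin m) =>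
          ∀ x, p.2 x ∈ Finset.image p.1 Finset.univ)).card
      = ∑ f : Fin a → Fin m, (Finset.image f Finset.univ).card ^ k := by
    rw [Finset.card_filter, ← Finset.univ_product_univ, Finset.sum_product]
    apply Finset.sum_congr rfl
    intro f _
    rw [← aux_card_into (n := k) (Finset.image f Finset.univ), Finset.card_filter]
  -- Step 2: fiberwise by the image
  have h2 : ∑ f : Fin a → Fin m, ((Finset.image f Finset.univ).card ^ k : ℝ)
      = ∑ s ∈ (Finset.univ : Finset (Fin m)).powerset,
          ((Finset.univ.filter
            (fun f : Fin a → Fin m => Finset.image f Finset.univ = s)).card : ℝ) * (s.card : ℝ) ^ k := by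
    rw [← Finset.sum_fiberwise_of_maps_to
      (g := fun f : Fin a → Fin m => Finset.image f Finset.univ)
      (fun f _ => Finset.mem_powerset.mpr (Finset.subset_univ _))]
    apply Finset.sum_congr rfl
    intro s _
    calc ∑ f ∈ Finset.univ.filter (fun f : Fin a → Fin m => Finset.image f Finset.univ = s),
          ((Finset.image f Finset.univ).card ^ k : ℝ)
        = ∑ _f ∈ Finset.univ.filter (fun f : Fin a → Fin m => Finset.image f Finset.univ = s),
          ((s.card : ℝ)) ^ k := by
          apply Finset.sum_congr rfl
          intro f hf
          rw [(Finset.mem_filter.mp hf).2]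
      _ = ((Finset.univ.filter
            (fun f : Fin a → Fin m => Finset.image f Finset.univ = s)).card : ℝ) * (s.card : ℝ) ^ k := by
          rw [Finset.sum_const, nsmul_eq_mul]
  -- Step 3: group by cardinality
  have h3 : ∑ s ∈ (Finset.univ : Finset (Fin m)).powerset,
        ((Finset.univ.filter
          (fun f : Fin a → Fin m => Finset.image f Finset.univ = s)).card : ℝ) * (s.card : ℝ) ^ k
      = ∑ i ∈ Finset.range (m + 1), (m.choose i : ℝ) * F i * (i : ℝ) ^ k := by
    have hm' : (Finset.univ : Finset (Fin m)).card = m := by simp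
    rw [Finset.powerset_card_biUnion, Finset.sum_biUnion (fun i _ j _ hij => Finset.pairwise_disjoint_powersetCard _ hij), hm']
    apply Finset.sum_congr rfl
    intro i hi
    calc ∑ s ∈ Finset.powersetCard i (Finset.univ : Finset (Fin m)),
          ((Finset.univ.filter
            (fun f : Fin a → Fin m => Finset.image f Finset.univ = s)).card : ℝ) * (s.card : ℝ) ^ k
        = ∑ s ∈ Finset.powersetCard i (Finset.univ : Finset (Fin m)), F i * (i : ℝ) ^ k := by
          apply Finset.sum_congr rfl
          intro s hs
          have hsc : s.card = i := (Finset.mem_powersetCard.mp hs).2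
          rw [aux_surj_count, hsc, hF]
      _ = (m.choose i : ℝ) * F i * (i : ℝ) ^ k := by
          rw [Finset.sum_const, Finset.card_powersetCard, hm', nsmul_eq_mul]
          ring
  -- Step 4: trim the sum
  have h4 : ∑ i ∈ Finset.range (m + 1), (m.choose i : ℝ) * F i * (i : ℝ) ^ k
      = ∑ i ∈ Finset.Icc 1 (min a m), (m.choose i : ℝ) * F i * (i : ℝ) ^ k := by
    symm
    apply Finset.sum_subset
    · intro i hi
      rw [Finset.mem_Icc] at hi
      rw [Finset.mem_range]
      omega
    · intro i hi hni
      rw [Finset.mem_range] at hi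
      rw [Finset.mem_Icc] at hni
      push_neg at hni
      rcases Nat.eq_zero_or_pos i with rfl | hipos
      · have h0 : F 0 = 0 := by
          simp [hF, zero_pow (show a ≠ 0 by omega)]
        rw [h0]; ring
      · have hia : a < i := by
          have := hni hipos
          omega
      -- F i = 0 since no surjections
        obtain ⟨s, hs, hsc⟩ := Finset.exists_subset_card_eq
          (s := (Finset.univ : Finset (Fin m))) (n := i)
          (by simp only [Finset.card_univ, Fintype.card_fin]; omega)
        have hzero : ((Finset.univ.filter
            (fun f : Fin a → Fin m => Finset.image f Finset.univ = s)).card : ℝ) = 0 := by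
          norm_cast
          rw [Finset.card_eq_zero, Finset.filter_eq_empty_iff]
          intro f _ hf
          have hcle : (Finset.image f Finset.univ).card ≤ a :=
            le_trans (Finset.card_image_le) (by simp)
          rw [hf, hsc] at hcle
          omega
        have hFi : F i = 0 := by
          have h := (aux_surj_count a m s).symm
          rw [hsc] at h
          calc F i = ∑ j ∈ Finset.range (i + 1),
              (-1 : ℝ) ^ j * (i.choose j : ℝ) * ((i - j : ℕ) : ℝ) ^ a := rfl
            _ = 0 := by rw [h, hzero]
        rw [hFi]; ring
  rw [h1]
  push_cast
  rw [h2, h3, h4, Finset.sum_div]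
  apply Finset.sum_congr rfl
  intro i hi
  have hm0 : (m : ℝ) ≠ 0 := by positivity
  rw [div_pow, pow_add]
  field_simp
  ring
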